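/- arXiv:2003.12268 — 3 statements merged into one kernel-verified Lean document; each statement's English description precedes it below -/
import Mathlib

section
/- Let n ∈ ℕ, let H₁, H₂ : (EuclideanSpace ℝ (Fin n)) × (EuclideanSpace ℝ (Fin n)) → ℝ be twice continuously differentiable (these are H(·, ·, t₀ + α·h) and H(·, ·, t₀ + (1−α)·h) with the times frozen), let h ∈ ℝ, and denote by ∇₁ and ∇₂ gradients with respect to the first and second ℝⁿ argument. Suppose Φ = (Q, P) : ℝⁿ × ℝⁿ → ℝⁿ × ℝⁿ is differentiable and there exist differentiable maps q, p : ℝⁿ × ℝⁿ → ℝⁿ such that for all (α, β): q = α + (h/2)·∇₂H₁(q, β), p = β − (h/2)·∇₁H₁(q, β), P = p − (h/2)·∇₁H₂(q, P), and Q = q + (h/2)·∇₂H₂(q, P). Then Φ is a contact transformation: for every point z and all tangent vectors u, v in ℝⁿ × ℝⁿ, ω(DΦ(z)u, DΦ(z)v) = ω(u, v), where ω((a, b), (a', b')) = ⟨a, b'⟩ − ⟨b, a'⟩ is the standard symplectic form. -/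
open RealInnerProductSpace InnerProductSpace ContinuousLinearMap

noncomputable section Helpers

variable {n : ℕ}

local notation "Evs" => EuclideanSpace ℝ (Fin n)

/-- ∇₁H as a function of both variables. -/
def dVF1 (H : Evs × Evs → ℝ) : Evs × Evs → Evs :=
  fun w => gradient (fun x => H (x, w.2)) w.1

/-- ∇₂H as a function of both variables. -/
def dVG1 (H : Evs × Evs → ℝ) : Evs × Evs → Evs :=
  fun w => gradient (fun y => H (w.1, y)) w.2

lemma dVF1_eq (H : Evs × Evs → ℝ) (hH : Differentiable ℝ H) :
    dVF1 H = fun w => (toDual ℝ Evs).symm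
      ((fderiv ℝ H w).comp (ContinuousLinearMap.inl ℝ Evs Evs)) := by
  funext w
  have h1 : HasFDerivAt (fun x : Evs => H (x, w.2))
      ((fderiv ℝ H w).comp (ContinuousLinearMap.inl ℝ Evs Evs)) w.1 := by
    have := HasFDerivAt.comp (f := fun e : Evs => (e, w.2)) w.1 (hH w).hasFDerivAt (hasFDerivAt_prodMk_left w.1 w.2)
    exact this
  exact (hasFDerivAt_iff_hasGradientAt.mp h1).gradient

lemma dVG1_eq (H : Evs × Evs → ℝ) (hH : Differentiable ℝ H) :
    dVG1 H = fun w => (toDual ℝ Evs).symm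
      ((fderiv ℝ H w).comp (ContinuousLinearMap.inr ℝ Evs Evs)) := by
  funext w
  have h1 : HasFDerivAt (fun y : Evs => H (w.1, y))
      ((fderiv ℝ H w).comp (ContinuousLinearMap.inr ℝ Evs Evs)) w.2 := by
    have := HasFDerivAt.comp (f := fun y : Evs => (w.1, y)) w.2 (hH w).hasFDerivAt (hasFDerivAt_prodMk_right w.1 w.2)
    exact this
  exact (hasFDerivAt_iff_hasGradientAt.mp h1).gradient

end Helpers

noncomputable section Helpers2
open InnerProductSpace ContinuousLinearMap
variable {n : ℕ}
local notation "Evs" => EuclideanSpace ℝ (Fin n)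

def dVfromDual : (StrongDual ℝ Evs) ≃ₗᵢ[ℝ] Evs := (toDual ℝ Evs).symm

def dVT1 : ((Evs × Evs) →L[ℝ] ℝ) →L[ℝ] Evs :=
  ((dVfromDual.toContinuousLinearEquiv :
      (StrongDual ℝ Evs) ≃L[ℝ] Evs) : (StrongDual ℝ Evs) →L[ℝ] Evs).comp
    ((compL ℝ Evs (Evs × Evs) ℝ).flip (ContinuousLinearMap.inl ℝ Evs Evs))

def dVT2 : ((Evs × Evs) →L[ℝ] ℝ) →L[ℝ] Evs :=
  ((dVfromDual.toContinuousLinearEquiv :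
      (StrongDual ℝ Evs) ≃L[ℝ] Evs) : (StrongDual ℝ Evs) →L[ℝ] Evs).comp
    ((compL ℝ Evs (Evs × Evs) ℝ).flip (ContinuousLinearMap.inr ℝ Evs Evs))

lemma dVT1_apply (φ : (Evs × Evs) →L[ℝ] ℝ) :
    dVT1 φ = (toDual ℝ Evs).symm (φ.comp (ContinuousLinearMap.inl ℝ Evs Evs)) := rfl

lemma dVT2_apply (φ : (Evs × Evs) →L[ℝ] ℝ) :
    dVT2 φ = (toDual ℝ Evs).symm (φ.comp (ContinuousLinearMap.inr ℝ Evs Evs)) := rfl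

lemma dVF1_eq' (H : Evs × Evs → ℝ) (hH : Differentiable ℝ H) :
    dVF1 H = fun w => dVT1 (fderiv ℝ H w) := by
  rw [dVF1_eq H hH]; rfl

lemma dVG1_eq' (H : Evs × Evs → ℝ) (hH : Differentiable ℝ H) :
    dVG1 H = fun w => dVT2 (fderiv ℝ H w) := by
  rw [dVG1_eq H hH]; rfl

lemma dV_hK (H : Evs × Evs → ℝ) (hH : ContDiff ℝ 2 H) :
    ContDiff ℝ 1 (fderiv ℝ H) := hH.fderiv_right (by norm_num)

lemma dVF1_diff (H : Evs × Evs → ℝ) (hH : ContDiff ℝ 2 H) :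
    Differentiable ℝ (dVF1 H) := by
  rw [dVF1_eq' H (hH.differentiable (by norm_num))]
  exact (dVT1.differentiable).comp ((dV_hK H hH).differentiable one_ne_zero)

lemma dVG1_diff (H : Evs × Evs → ℝ) (hH : ContDiff ℝ 2 H) :
    Differentiable ℝ (dVG1 H) := by
  rw [dVG1_eq' H (hH.differentiable (by norm_num))]
  exact (dVT2.differentiable).comp ((dV_hK H hH).differentiable one_ne_zero)

lemma dVF1_fderiv (H : Evs × Evs → ℝ) (hH : ContDiff ℝ 2 H) (w X : Evs × Evs) :
    fderiv ℝ (dVF1 H) w X = (toDual ℝ Evs).symm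
      ((fderiv ℝ (fderiv ℝ H) w X).comp (ContinuousLinearMap.inl ℝ Evs Evs)) := by
  rw [dVF1_eq' H (hH.differentiable (by norm_num))]
  have h1 : HasFDerivAt (fun w => dVT1 (fderiv ℝ H w))
      (dVT1.comp (fderiv ℝ (fderiv ℝ H) w)) w :=
    (dVT1.hasFDerivAt).comp w ((dV_hK H hH).differentiable one_ne_zero w).hasFDerivAt
  rw [h1.fderiv]; rfl

lemma dVG1_fderiv (H : Evs × Evs → ℝ) (hH : ContDiff ℝ 2 H) (w X : Evs × Evs) :
    fderiv ℝ (dVG1 H) w X = (toDual ℝ Evs).symm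
      ((fderiv ℝ (fderiv ℝ H) w X).comp (ContinuousLinearMap.inr ℝ Evs Evs)) := by
  rw [dVG1_eq' H (hH.differentiable (by norm_num))]
  have h1 : HasFDerivAt (fun w => dVT2 (fderiv ℝ H w))
      (dVT2.comp (fderiv ℝ (fderiv ℝ H) w)) w :=
    (dVT2.hasFDerivAt).comp w ((dV_hK H hH).differentiable one_ne_zero w).hasFDerivAt
  rw [h1.fderiv]; rfl

open RealInnerProductSpace in
lemma dV_sym (H : Evs × Evs → ℝ) (hH : ContDiff ℝ 2 H) (w X Y : Evs × Evs) :
    ⟪fderiv ℝ (dVF1 H) w X, Y.1⟫ + ⟪fderiv ℝ (dVG1 H) w X, Y.2⟫ =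
    ⟪X.1, fderiv ℝ (dVF1 H) w Y⟫ + ⟪X.2, fderiv ℝ (dVG1 H) w Y⟫ := by
  have hsym := (hH.contDiffAt (x := w)).isSymmSndFDerivAt (by norm_num)
  have key : ∀ A B : Evs × Evs,
      ⟪fderiv ℝ (dVF1 H) w A, B.1⟫ + ⟪fderiv ℝ (dVG1 H) w A, B.2⟫ =
      fderiv ℝ (fderiv ℝ H) w A B := by
    intro A B
    rw [dVF1_fderiv H hH, dVG1_fderiv H hH, toDual_symm_apply, toDual_symm_apply]
    simp only [ContinuousLinearMap.comp_apply, ContinuousLinearMap.inl_apply,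
      ContinuousLinearMap.inr_apply]
    rw [← map_add]
    congr 1
    exact Prod.ext (by simp) (by simp)
  rw [key X Y, hsym X Y, ← key Y X, real_inner_comm X.1, real_inner_comm X.2]

end Helpers2

open RealInnerProductSpace

/-- The implicit second-order method (7.4) is a contact (symplectic) transformation:
with `q = α + (h/2)·∇₂H₁(q, β)`, `p = β − (h/2)·∇₁H₁(q, β)`,
`P = p − (h/2)·∇₁H₂(q, P)`, `Q = q + (h/2)·∇₂H₂(q, P)`, and `Φ = (Q, P)`
differentiable, the derivative of `Φ` preserves the standard symplectic form
`ω((a,b),(a',b')) = ⟪a,b'⟫ − ⟪b,a'⟫`. -/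
theorem deVogelaere_method_7_4_contact
    (n : ℕ)
    (H₁ H₂ : (EuclideanSpace ℝ (Fin n)) × (EuclideanSpace ℝ (Fin n)) → ℝ)
    (hH₁ : ContDiff ℝ 2 H₁) (hH₂ : ContDiff ℝ 2 H₂) (h : ℝ)
    (q p Q P : (EuclideanSpace ℝ (Fin n)) × (EuclideanSpace ℝ (Fin n)) →
      EuclideanSpace ℝ (Fin n))
    (hqd : Differentiable ℝ q) (hpd : Differentiable ℝ p)
    (hΦ : Differentiable ℝ
      (fun z : (EuclideanSpace ℝ (Fin n)) × (EuclideanSpace ℝ (Fin n)) => (Q z, P z)))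
    (hq : ∀ z : (EuclideanSpace ℝ (Fin n)) × (EuclideanSpace ℝ (Fin n)),
      q z = z.1 + (h / 2) • gradient (fun y => H₁ (q z, y)) z.2)
    (hp : ∀ z : (EuclideanSpace ℝ (Fin n)) × (EuclideanSpace ℝ (Fin n)),
      p z = z.2 - (h / 2) • gradient (fun x => H₁ (x, z.2)) (q z))
    (hP : ∀ z : (EuclideanSpace ℝ (Fin n)) × (EuclideanSpace ℝ (Fin n)),
      P z = p z - (h / 2) • gradient (fun x => H₂ (x, P z)) (q z))
    (hQ : ∀ z : (EuclideanSpace ℝ (Fin n)) × (EuclideanSpace ℝ (Fin n)),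
      Q z = q z + (h / 2) • gradient (fun y => H₂ (q z, y)) (P z)) :
    ∀ (z u v : (EuclideanSpace ℝ (Fin n)) × (EuclideanSpace ℝ (Fin n))),
      ⟪(fderiv ℝ (fun w => (Q w, P w)) z u).1, (fderiv ℝ (fun w => (Q w, P w)) z v).2⟫
        - ⟪(fderiv ℝ (fun w => (Q w, P w)) z u).2,
            (fderiv ℝ (fun w => (Q w, P w)) z v).1⟫
      = ⟪u.1, v.2⟫ - ⟪u.2, v.1⟫ := by
  -- differentiability of the components of Φ
  have hQd : Differentiable ℝ Q := hΦ.fst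
  have hPd : Differentiable ℝ P := hΦ.snd
  -- rewrite the implicit equations in terms of dVF1 / dVG1
  have hq' : q = fun z => z.1 + (h / 2) • dVG1 H₁ (q z, z.2) := funext fun z => hq z
  have hp' : p = fun z => z.2 - (h / 2) • dVF1 H₁ (q z, z.2) := funext fun z => hp z
  have hP' : P = fun z => p z - (h / 2) • dVF1 H₂ (q z, P z) := funext fun z => hP z
  have hQ' : Q = fun z => q z + (h / 2) • dVG1 H₂ (q z, P z) := funext fun z => hQ z
  intro z u v
  -- derivatives of the auxiliary maps
  have hw1 : HasFDerivAt (fun w => (q w, w.2))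
      ((fderiv ℝ q z).prod (ContinuousLinearMap.snd ℝ _ _)) z :=
    (hqd z).hasFDerivAt.prodMk (hasFDerivAt_snd)
  have hw2 : HasFDerivAt (fun w => (q w, P w))
      ((fderiv ℝ q z).prod (fderiv ℝ P z)) z :=
    (hqd z).hasFDerivAt.prodMk (hPd z).hasFDerivAt
  have hG1c : HasFDerivAt (fun w => dVG1 H₁ (q w, w.2))
      ((fderiv ℝ (dVG1 H₁) (q z, z.2)).comp
        ((fderiv ℝ q z).prod (ContinuousLinearMap.snd ℝ _ _))) z :=
    HasFDerivAt.comp (f := fun w => (q w, w.2)) z (dVG1_diff H₁ hH₁ (q z, z.2)).hasFDerivAt hw1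
  have hF1c : HasFDerivAt (fun w => dVF1 H₁ (q w, w.2))
      ((fderiv ℝ (dVF1 H₁) (q z, z.2)).comp
        ((fderiv ℝ q z).prod (ContinuousLinearMap.snd ℝ _ _))) z :=
    HasFDerivAt.comp (f := fun w => (q w, w.2)) z (dVF1_diff H₁ hH₁ (q z, z.2)).hasFDerivAt hw1
  have hF2c : HasFDerivAt (fun w => dVF1 H₂ (q w, P w))
      ((fderiv ℝ (dVF1 H₂) (q z, P z)).comp
        ((fderiv ℝ q z).prod (fderiv ℝ P z))) z :=
    HasFDerivAt.comp (f := fun w => (q w, P w)) z (dVF1_diff H₂ hH₂ (q z, P z)).hasFDerivAt hw2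
  have hG2c : HasFDerivAt (fun w => dVG1 H₂ (q w, P w))
      ((fderiv ℝ (dVG1 H₂) (q z, P z)).comp
        ((fderiv ℝ q z).prod (fderiv ℝ P z))) z :=
    HasFDerivAt.comp (f := fun w => (q w, P w)) z (dVG1_diff H₂ hH₂ (q z, P z)).hasFDerivAt hw2
  have h4q : HasFDerivAt q ((ContinuousLinearMap.fst ℝ _ _) +
      (h / 2) • ((fderiv ℝ (dVG1 H₁) (q z, z.2)).comp
        ((fderiv ℝ q z).prod (ContinuousLinearMap.snd ℝ _ _)))) z := by
    exact ((hasFDerivAt_fst).add (hG1c.const_smul (h / 2))).congr_of_eventuallyEq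
      (Filter.Eventually.of_forall fun w => congrFun hq' w)
  have h4p : HasFDerivAt p ((ContinuousLinearMap.snd ℝ _ _) -
      (h / 2) • ((fderiv ℝ (dVF1 H₁) (q z, z.2)).comp
        ((fderiv ℝ q z).prod (ContinuousLinearMap.snd ℝ _ _)))) z := by
    exact ((hasFDerivAt_snd).sub (hF1c.const_smul (h / 2))).congr_of_eventuallyEq
      (Filter.Eventually.of_forall fun w => congrFun hp' w)
  have h4P : HasFDerivAt P ((fderiv ℝ p z) -
      (h / 2) • ((fderiv ℝ (dVF1 H₂) (q z, P z)).comp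
        ((fderiv ℝ q z).prod (fderiv ℝ P z)))) z := by
    exact (((hpd z).hasFDerivAt).sub (hF2c.const_smul (h / 2))).congr_of_eventuallyEq
      (Filter.Eventually.of_forall fun w => congrFun hP' w)
  have h4Q : HasFDerivAt Q ((fderiv ℝ q z) +
      (h / 2) • ((fderiv ℝ (dVG1 H₂) (q z, P z)).comp
        ((fderiv ℝ q z).prod (fderiv ℝ P z)))) z := by
    exact (((hqd z).hasFDerivAt).add (hG2c.const_smul (h / 2))).congr_of_eventuallyEq
      (Filter.Eventually.of_forall fun w => congrFun hQ' w)
  -- directional-derivative equations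
  have eq_a : ∀ x, fderiv ℝ q z x = x.1 +
      (h / 2) • fderiv ℝ (dVG1 H₁) (q z, z.2) (fderiv ℝ q z x, x.2) := by
    intro x
    conv_lhs => rw [h4q.fderiv]
    simp
  have eq_m : ∀ x, fderiv ℝ p z x = x.2 -
      (h / 2) • fderiv ℝ (dVF1 H₁) (q z, z.2) (fderiv ℝ q z x, x.2) := by
    intro x
    conv_lhs => rw [h4p.fderiv]
    simp
  have eq_b : ∀ x, fderiv ℝ P z x = fderiv ℝ p z x -
      (h / 2) • fderiv ℝ (dVF1 H₂) (q z, P z) (fderiv ℝ q z x, fderiv ℝ P z x) := by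
    intro x
    conv_lhs => rw [h4P.fderiv]
    simp
  have eq_c : ∀ x, fderiv ℝ Q z x = fderiv ℝ q z x +
      (h / 2) • fderiv ℝ (dVG1 H₂) (q z, P z) (fderiv ℝ q z x, fderiv ℝ P z x) := by
    intro x
    conv_lhs => rw [h4Q.fderiv]
    simp
  -- components of the derivative of Φ
  have hΦf : fderiv ℝ (fun w => (Q w, P w)) z = (fderiv ℝ Q z).prod (fderiv ℝ P z) :=
    (((hQd z).hasFDerivAt).prodMk ((hPd z).hasFDerivAt)).fderiv
  rw [hΦf]
  simp only [ContinuousLinearMap.prod_apply]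
  have s1 : ⟪fderiv ℝ Q z u, fderiv ℝ P z v⟫ = ⟪fderiv ℝ q z u, fderiv ℝ P z v⟫
      + (h / 2) * ⟪fderiv ℝ (dVG1 H₂) (q z, P z) (fderiv ℝ q z u, fderiv ℝ P z u),
          fderiv ℝ P z v⟫ := by
    conv_lhs => rw [eq_c u]
    rw [inner_add_left, real_inner_smul_left]
  have s2 : ⟪fderiv ℝ P z u, fderiv ℝ Q z v⟫ = ⟪fderiv ℝ P z u, fderiv ℝ q z v⟫
      + (h / 2) * ⟪fderiv ℝ P z u,
          fderiv ℝ (dVG1 H₂) (q z, P z) (fderiv ℝ q z v, fderiv ℝ P z v)⟫ := by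
    conv_lhs => rw [eq_c v]
    rw [inner_add_right, real_inner_smul_right]
  have s3 : ⟪fderiv ℝ P z u, fderiv ℝ q z v⟫ = ⟪fderiv ℝ p z u, fderiv ℝ q z v⟫
      - (h / 2) * ⟪fderiv ℝ (dVF1 H₂) (q z, P z) (fderiv ℝ q z u, fderiv ℝ P z u),
          fderiv ℝ q z v⟫ := by
    conv_lhs => rw [eq_b u]
    rw [inner_sub_left, real_inner_smul_left]
  have s4 : ⟪fderiv ℝ q z u, fderiv ℝ P z v⟫ = ⟪fderiv ℝ q z u, fderiv ℝ p z v⟫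
      - (h / 2) * ⟪fderiv ℝ q z u,
          fderiv ℝ (dVF1 H₂) (q z, P z) (fderiv ℝ q z v, fderiv ℝ P z v)⟫ := by
    conv_lhs => rw [eq_b v]
    rw [inner_sub_right, real_inner_smul_right]
  have s5 : ⟪fderiv ℝ (dVF1 H₂) (q z, P z) (fderiv ℝ q z u, fderiv ℝ P z u), fderiv ℝ q z v⟫
      + ⟪fderiv ℝ (dVG1 H₂) (q z, P z) (fderiv ℝ q z u, fderiv ℝ P z u), fderiv ℝ P z v⟫
      = ⟪fderiv ℝ q z u, fderiv ℝ (dVF1 H₂) (q z, P z) (fderiv ℝ q z v, fderiv ℝ P z v)⟫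
      + ⟪fderiv ℝ P z u, fderiv ℝ (dVG1 H₂) (q z, P z) (fderiv ℝ q z v, fderiv ℝ P z v)⟫ := by
    simpa using dV_sym H₂ hH₂ (q z, P z) (fderiv ℝ q z u, fderiv ℝ P z u)
      (fderiv ℝ q z v, fderiv ℝ P z v)
  have s6 : ⟪fderiv ℝ q z u, fderiv ℝ p z v⟫ = ⟪fderiv ℝ q z u, v.2⟫
      - (h / 2) * ⟪fderiv ℝ q z u,
          fderiv ℝ (dVF1 H₁) (q z, z.2) (fderiv ℝ q z v, v.2)⟫ := by
    conv_lhs => rw [eq_m v]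
    rw [inner_sub_right, real_inner_smul_right]
  have s7 : ⟪fderiv ℝ p z u, fderiv ℝ q z v⟫ = ⟪u.2, fderiv ℝ q z v⟫
      - (h / 2) * ⟪fderiv ℝ (dVF1 H₁) (q z, z.2) (fderiv ℝ q z u, u.2),
          fderiv ℝ q z v⟫ := by
    conv_lhs => rw [eq_m u]
    rw [inner_sub_left, real_inner_smul_left]
  have s8 : ⟪fderiv ℝ q z u, v.2⟫ = ⟪u.1, v.2⟫
      + (h / 2) * ⟪fderiv ℝ (dVG1 H₁) (q z, z.2) (fderiv ℝ q z u, u.2), v.2⟫ := by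
    conv_lhs => rw [eq_a u]
    rw [inner_add_left, real_inner_smul_left]
  have s9 : ⟪u.2, fderiv ℝ q z v⟫ = ⟪u.2, v.1⟫
      + (h / 2) * ⟪u.2, fderiv ℝ (dVG1 H₁) (q z, z.2) (fderiv ℝ q z v, v.2)⟫ := by
    conv_lhs => rw [eq_a v]
    rw [inner_add_right, real_inner_smul_right]
  have s10 : ⟪fderiv ℝ (dVF1 H₁) (q z, z.2) (fderiv ℝ q z u, u.2), fderiv ℝ q z v⟫
      + ⟪fderiv ℝ (dVG1 H₁) (q z, z.2) (fderiv ℝ q z u, u.2), v.2⟫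
      = ⟪fderiv ℝ q z u, fderiv ℝ (dVF1 H₁) (q z, z.2) (fderiv ℝ q z v, v.2)⟫
      + ⟪u.2, fderiv ℝ (dVG1 H₁) (q z, z.2) (fderiv ℝ q z v, v.2)⟫ := by
    simpa using dV_sym H₁ hH₁ (q z, z.2) (fderiv ℝ q z u, u.2) (fderiv ℝ q z v, v.2)
  linear_combination s1 - s2 + s4 - s3 + (h / 2) * s5 + s6 - s7 + s8 - s9 + (h / 2) * s10
end

section
/- Let n ∈ ℕ, let U : EuclideanSpace ℝ (Fin n) → ℝ be twice continuously differentiable (the time argument is a fixed parameter absorbed into U), and let h ∈ ℝ. Define the explicit map T : ℝⁿ × ℝⁿ → ℝⁿ × ℝⁿ by T(q, v) = (q₂, v₂), where q₁ = q + (h/2)·v, v₂ = v − h·∇U(q₁), and q₂ = q₁ + (h/2)·v₂. Then T is differentiable at every point and is a contact transformation: for every point z and all tangent vectors u, w in ℝⁿ × ℝⁿ, ω(DT(z)u, DT(z)w) = ω(u, w), where ω((a, b), (a', b')) = ⟨a, b'⟩ − ⟨b, a'⟩ is the standard symplectic form. -/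
open RealInnerProductSpace

noncomputable section ProofAux

variable {n : ℕ}

private def Phi (n : ℕ) : ((EuclideanSpace ℝ (Fin n)) →L[ℝ] ℝ) →L[ℝ] (EuclideanSpace ℝ (Fin n)) :=
  (InnerProductSpace.toDual ℝ (EuclideanSpace ℝ (Fin n))).symm.toContinuousLinearEquiv.toContinuousLinearMap

private def gradDeriv (U : EuclideanSpace ℝ (Fin n) → ℝ) (x : EuclideanSpace ℝ (Fin n)) :
    (EuclideanSpace ℝ (Fin n)) →L[ℝ] (EuclideanSpace ℝ (Fin n)) :=
  (Phi n).comp (fderiv ℝ (fderiv ℝ U) x)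

private lemma hasFDerivAt_gradient {U : EuclideanSpace ℝ (Fin n) → ℝ} (hU : ContDiff ℝ 2 U)
    (x : EuclideanSpace ℝ (Fin n)) :
    HasFDerivAt (gradient U) (gradDeriv U x) x := by
  have h1 : ContDiff ℝ 1 (fderiv ℝ U) := hU.fderiv_right (by norm_num)
  have h2 : HasFDerivAt (fderiv ℝ U) (fderiv ℝ (fderiv ℝ U) x) x :=
    (h1.differentiable (by norm_num) x).hasFDerivAt
  have := ((Phi n).hasFDerivAt).comp x h2
  exact this

private lemma gradDeriv_symm {U : EuclideanSpace ℝ (Fin n) → ℝ} (hU : ContDiff ℝ 2 U)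
    (x v w : EuclideanSpace ℝ (Fin n)) :
    ⟪gradDeriv U x v, w⟫ = ⟪gradDeriv U x w, v⟫ := by
  have hsym := hU.contDiffAt.isSymmSndFDerivAt (x := x) (by norm_num)
  have key : ∀ a b : EuclideanSpace ℝ (Fin n),
      ⟪gradDeriv U x a, b⟫ = fderiv ℝ (fderiv ℝ U) x a b := by
    intro a b
    simp [gradDeriv, Phi, InnerProductSpace.toDual_symm_apply]
  rw [key, key, hsym v w]

end ProofAux

/-- The explicit second-order method (7.5) is a contact (symplectic) transformation:
with `q₁ = q + (h/2)·v`, `v₂ = v − h·∇U(q₁)`, `q₂ = q₁ + (h/2)·v₂`, the map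
`T(q, v) = (q₂, v₂)` is everywhere differentiable and its derivative preserves the
standard symplectic form `ω((a,b),(a',b')) = ⟪a,b'⟫ − ⟪b,a'⟫`. -/
theorem deVogelaere_method_7_5_contact
    (n : ℕ)
    (U : EuclideanSpace ℝ (Fin n) → ℝ) (hU : ContDiff ℝ 2 U) (h : ℝ)
    (T : (EuclideanSpace ℝ (Fin n)) × (EuclideanSpace ℝ (Fin n)) →
      (EuclideanSpace ℝ (Fin n)) × (EuclideanSpace ℝ (Fin n)))
    (hT : ∀ q v : EuclideanSpace ℝ (Fin n),
      T (q, v) =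
        ((q + (h / 2) • v) +
            (h / 2) • (v - h • gradient U (q + (h / 2) • v)),
          v - h • gradient U (q + (h / 2) • v))) :
    (∀ z : (EuclideanSpace ℝ (Fin n)) × (EuclideanSpace ℝ (Fin n)),
      DifferentiableAt ℝ T z) ∧
    (∀ (z u w : (EuclideanSpace ℝ (Fin n)) × (EuclideanSpace ℝ (Fin n))),
      ⟪(fderiv ℝ T z u).1, (fderiv ℝ T z w).2⟫ - ⟪(fderiv ℝ T z u).2, (fderiv ℝ T z w).1⟫
        = ⟪u.1, w.2⟫ - ⟪u.2, w.1⟫) := by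
  classical
  set L1 : (EuclideanSpace ℝ (Fin n)) × (EuclideanSpace ℝ (Fin n)) →L[ℝ] (EuclideanSpace ℝ (Fin n)) :=
    ContinuousLinearMap.fst ℝ _ _ + (h / 2) • ContinuousLinearMap.snd ℝ _ _ with hL1
  have hL1apply : ∀ u : (EuclideanSpace ℝ (Fin n)) × (EuclideanSpace ℝ (Fin n)),
      L1 u = u.1 + (h / 2) • u.2 := by intro u; simp [hL1]
  have hTfun : T = fun z : (EuclideanSpace ℝ (Fin n)) × (EuclideanSpace ℝ (Fin n)) =>
      ((z.1 + (h / 2) • z.2) + (h / 2) • (z.2 - h • gradient U (z.1 + (h / 2) • z.2)),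
        z.2 - h • gradient U (z.1 + (h / 2) • z.2)) := by
    funext z
    rcases z with ⟨q, v⟩
    exact hT q v
  have key : ∀ z : (EuclideanSpace ℝ (Fin n)) × (EuclideanSpace ℝ (Fin n)), HasFDerivAt T
      (((L1 + (h / 2) • ((ContinuousLinearMap.snd ℝ _ _) -
          h • ((gradDeriv U (L1 z)).comp L1))).prod
        ((ContinuousLinearMap.snd ℝ _ _) - h • ((gradDeriv U (L1 z)).comp L1)))) z := by
    intro z
    rw [hTfun]
    have hq1 : HasFDerivAt
        (fun z : (EuclideanSpace ℝ (Fin n)) × (EuclideanSpace ℝ (Fin n)) =>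
          z.1 + (h / 2) • z.2) L1 z := by
      have h0 := hasFDerivAt_fst.add
        (hasFDerivAt_snd.const_smul (h / 2))
        (x := z) (𝕜 := ℝ) (E := (EuclideanSpace ℝ (Fin n)) × (EuclideanSpace ℝ (Fin n)))
      exact h0
    have hgrad : HasFDerivAt
        (fun z : (EuclideanSpace ℝ (Fin n)) × (EuclideanSpace ℝ (Fin n)) =>
          gradient U (z.1 + (h / 2) • z.2))
        ((gradDeriv U (L1 z)).comp L1) z := by
      have hcomp := (hasFDerivAt_gradient hU (L1 z)).comp z (L1.hasFDerivAt (x := z))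
      have heq : (gradient U ∘ ⇑L1) =
          fun z : (EuclideanSpace ℝ (Fin n)) × (EuclideanSpace ℝ (Fin n)) =>
            gradient U (z.1 + (h / 2) • z.2) := by
        funext y; simp [Function.comp, hL1apply]
      rw [heq] at hcomp
      rw [hL1apply] at hcomp
      exact hcomp
    have hv2 : HasFDerivAt
        (fun z : (EuclideanSpace ℝ (Fin n)) × (EuclideanSpace ℝ (Fin n)) =>
          z.2 - h • gradient U (z.1 + (h / 2) • z.2))
        ((ContinuousLinearMap.snd ℝ _ _) - h • ((gradDeriv U (L1 z)).comp L1)) z :=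
      (hasFDerivAt_snd).sub (hgrad.const_smul h)
    exact HasFDerivAt.prodMk (hq1.add (hv2.const_smul (h / 2))) hv2
  constructor
  · intro z; exact (key z).differentiableAt
  · intro z u w
    rw [(key z).fderiv]
    set A := gradDeriv U (L1 z) with hA
    have hsymm : ∀ a b : EuclideanSpace ℝ (Fin n), ⟪A a, b⟫ = ⟪A b, a⟫ :=
      fun a b => gradDeriv_symm hU _ a b
    have S : ∀ x y : EuclideanSpace ℝ (Fin n), ⟪x, A y⟫ = ⟪A x, y⟫ := fun x y => by
      rw [real_inner_comm]; exact hsymm y x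
    simp only [ContinuousLinearMap.prod_apply, ContinuousLinearMap.add_apply,
      ContinuousLinearMap.smul_apply, ContinuousLinearMap.sub_apply,
      ContinuousLinearMap.coe_snd', ContinuousLinearMap.comp_apply, hL1apply]
    set a := u.1; set b := u.2; set a' := w.1; set b' := w.2
    simp only [map_add, map_smul, smul_sub, smul_add, smul_smul,
      inner_add_left, inner_add_right, inner_sub_left, inner_sub_right,
      real_inner_smul_left, real_inner_smul_right]
    linear_combination (-h) * S a a' + (-(h * (h / 2))) * S a b' +
      (-(h * (h / 2))) * S b a' + (-(h * (h / 2) * (h / 2))) * S b b'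
end

section
/- Let n ∈ ℕ, let U : (EuclideanSpace ℝ (Fin n)) × ℝ → ℝ be twice continuously differentiable, and let q : ℝ → EuclideanSpace ℝ (Fin n) be three times continuously differentiable on a neighborhood of t₀ with q''(t) = −∇_q U(q(t), t) there. Write q₀ = q(t₀), v₀ = q'(t₀), and for each h ∈ ℝ set q₁(h) = q₀ + (h/2)·v₀, v₂(h) = v₀ − h·∇_q U(q₁(h), t₀ + h/2), q₂(h) = q₁(h) + (h/2)·v₂(h). Then the method is second order: as h → 0, ‖q₂(h) − q(t₀ + h)‖ = o(h²) and ‖v₂(h) − q'(t₀ + h)‖ = o(h²). -/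
open Asymptotics Filter


/-- Second-order Taylor–Young for vector-valued functions of a real variable. -/
lemma taylor2 {E : Type*} [NormedAddCommGroup E] [NormedSpace ℝ E]
    {f : ℝ → E} {s : Set ℝ} {a : ℝ} (hso : IsOpen s) (has : a ∈ s)
    (hf : ContDiffOn ℝ 2 f s) :
    (fun h : ℝ => f (a + h) - f a - h • deriv f a - (h ^ 2 / 2) • deriv (deriv f) a)
      =o[nhds 0] fun h : ℝ => h ^ 2 := by
  set b := deriv (deriv f) a with hb
  have hf' : ContDiffOn ℝ 1 (deriv f) s := hf.deriv_of_isOpen hso (by norm_num)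
  have hfd : DifferentiableOn ℝ f s := hf.differentiableOn (by norm_num)
  have hf'd : DifferentiableOn ℝ (deriv f) s := hf'.differentiableOn one_ne_zero
  have hf'a : DifferentiableAt ℝ (deriv f) a := hf'd.differentiableAt (hso.mem_nhds has)
  have hD : HasDerivAt (deriv f) b a := hf'a.hasDerivAt
  -- the little-o property of the derivative of `deriv f` at `a`, recentred at 0
  have hp : (fun u : ℝ => deriv f (a + u) - deriv f a - u • b) =o[nhds 0] fun u : ℝ => u := by
    have h1 := (hasDerivAt_iff_isLittleO.1 hD).comp_tendsto
      (Continuous.tendsto' (by continuity) 0 a (by simp) :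
        Filter.Tendsto (fun u : ℝ => a + u) (nhds 0) (nhds a))
    simpa [Function.comp_def] using h1
  obtain ⟨δ₀, hδ₀, hball⟩ := Metric.isOpen_iff.1 hso a has
  rw [isLittleO_iff]
  intro ε hε
  have hp' := (isLittleO_iff.1 hp) hε
  obtain ⟨δ₁, hδ₁, hP⟩ := Metric.eventually_nhds_iff.1 hp'
  have hδ : (0:ℝ) < min δ₀ δ₁ := lt_min hδ₀ hδ₁
  rw [Metric.eventually_nhds_iff]
  refine ⟨min δ₀ δ₁, hδ, fun {h} hh => ?_⟩
  simp only [Real.dist_eq, sub_zero] at hh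
  set g : ℝ → E := fun u => f (a + u) - f a - u • deriv f a - (u ^ 2 / 2) • b with hg
  set p : ℝ → E := fun u => deriv f (a + u) - deriv f a - u • b with hpdef
  have hmem : ∀ u ∈ Metric.closedBall (0:ℝ) |h|, a + u ∈ s := by
    intro u hu
    apply hball
    simp only [Metric.mem_closedBall, Real.dist_eq, sub_zero] at hu
    simp only [Metric.mem_ball, Real.dist_eq, add_sub_cancel_left]
    exact lt_of_le_of_lt hu (lt_of_lt_of_le hh (min_le_left _ _))
  have hgd : ∀ u ∈ Metric.closedBall (0:ℝ) |h|,
      HasDerivWithinAt g (p u) (Metric.closedBall (0:ℝ) |h|) u := by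
    intro u hu
    have h1 : HasDerivAt (fun u : ℝ => f (a + u)) (deriv f (a + u)) u := by
      have hfa : HasDerivAt f (deriv f (a + u)) (a + u) :=
        (hfd.differentiableAt (hso.mem_nhds (hmem u hu))).hasDerivAt
      have := HasDerivAt.scomp u hfa ((hasDerivAt_id u).const_add a)
      simpa [Function.comp_def] using this
    have h2 : HasDerivAt (fun u : ℝ => u • deriv f a) (deriv f a) u := by
      simpa using (hasDerivAt_id u).smul_const (deriv f a)
    have h3 : HasDerivAt (fun u : ℝ => (u ^ 2 / 2) • b) (u • b) u := by
      have := ((hasDerivAt_pow 2 u).div_const 2).smul_const b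
      norm_num at this
      convert this using 1
    have h4 := ((h1.sub h2).sub h3).sub_const (f a)
    have hgeq : g = fun u : ℝ => f (a + u) - u • deriv f a - (u ^ 2 / 2) • b - f a := by
      funext u; simp only [hg]; abel
    rw [hgeq]
    exact h4.hasDerivWithinAt
  have hbound : ∀ u ∈ Metric.closedBall (0:ℝ) |h|, ‖p u‖ ≤ ε * |h| := by
    intro u hu
    simp only [Metric.mem_closedBall, Real.dist_eq, sub_zero] at hu
    have := hP (y := u) (by
      simp only [Real.dist_eq, sub_zero]
      exact lt_of_le_of_lt hu (lt_of_lt_of_le hh (min_le_right _ _)))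
    calc ‖p u‖ ≤ ε * ‖u‖ := this
      _ ≤ ε * |h| := by
          apply mul_le_mul_of_nonneg_left _ hε.le
          simpa using hu
  have key := Convex.norm_image_sub_le_of_norm_hasDerivWithin_le hgd hbound
    (convex_closedBall _ _) (by simp : (0:ℝ) ∈ Metric.closedBall (0:ℝ) |h|)
    (by simp [Metric.mem_closedBall, Real.dist_eq] : h ∈ Metric.closedBall (0:ℝ) |h|)
  have hg0 : g 0 = 0 := by simp [hg]
  rw [hg0, sub_zero, sub_zero] at key
  calc ‖g h‖ ≤ ε * |h| * ‖h‖ := key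
    _ = ε * ‖h ^ 2‖ := by
        rw [Real.norm_eq_abs, Real.norm_eq_abs, abs_pow]
        ring


lemma gradContDiff {n : ℕ} {U : (EuclideanSpace ℝ (Fin n)) × ℝ → ℝ} (hU : ContDiff ℝ 2 U) :
    ContDiff ℝ 1 (fun p : (EuclideanSpace ℝ (Fin n)) × ℝ =>
      gradient (fun x => U (x, p.2)) p.1) := by
  have hfd : ∀ p : (EuclideanSpace ℝ (Fin n)) × ℝ, fderiv ℝ (fun x => U (x, p.2)) p.1 =
      (fderiv ℝ U p).comp (ContinuousLinearMap.inl ℝ (EuclideanSpace ℝ (Fin n)) ℝ) := by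
    intro p
    have h1 : HasFDerivAt (fun x : EuclideanSpace ℝ (Fin n) => (x, p.2))
        (ContinuousLinearMap.inl ℝ (EuclideanSpace ℝ (Fin n)) ℝ) p.1 :=
      hasFDerivAt_prodMk_left p.1 p.2
    have h2 : HasFDerivAt U (fderiv ℝ U p) ((fun x : EuclideanSpace ℝ (Fin n) => (x, p.2)) p.1) := by
      simpa using (hU.differentiable (by norm_num) p).hasFDerivAt
    exact (h2.comp p.1 h1).fderiv
  have hgrad : (fun p : (EuclideanSpace ℝ (Fin n)) × ℝ => gradient (fun x => U (x, p.2)) p.1) =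
      fun p : (EuclideanSpace ℝ (Fin n)) × ℝ =>
        (InnerProductSpace.toDual ℝ (EuclideanSpace ℝ (Fin n))).symm
        ((fderiv ℝ U p).comp (ContinuousLinearMap.inl ℝ (EuclideanSpace ℝ (Fin n)) ℝ)) := by
    funext p
    rw [gradient, hfd p]
  rw [hgrad]
  exact ((InnerProductSpace.toDual ℝ (EuclideanSpace ℝ (Fin n))).symm.contDiff).comp
    ((hU.fderiv_right (by norm_num)).clm_comp contDiff_const)

/-- Method (7.5) is second order: if `q'' (t) = −∇_q U(q(t), t)` near `t₀` with `q`
three times continuously differentiable there and `U` twice continuously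
differentiable, then with `q₁(h) = q₀ + (h/2)·v₀`,
`v₂(h) = v₀ − h·∇_q U(q₁(h), t₀ + h/2)`, `q₂(h) = q₁(h) + (h/2)·v₂(h)`, one has
`‖q₂(h) − q(t₀ + h)‖ = o(h²)` and `‖v₂(h) − q'(t₀ + h)‖ = o(h²)` as `h → 0`. -/
theorem deVogelaere_method_7_5_second_order
    (n : ℕ)
    (U : (EuclideanSpace ℝ (Fin n)) × ℝ → ℝ) (hU : ContDiff ℝ 2 U) (t₀ : ℝ)
    (q : ℝ → EuclideanSpace ℝ (Fin n)) (s : Set ℝ) (hs : s ∈ nhds t₀)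
    (hq : ContDiffOn ℝ 3 q s)
    (hode : ∀ t ∈ s,
      deriv (deriv q) t = - gradient (fun x => U (x, t)) (q t))
    (q₁ v₂ q₂ : ℝ → EuclideanSpace ℝ (Fin n))
    (hq₁ : ∀ h : ℝ, q₁ h = q t₀ + (h / 2) • deriv q t₀)
    (hv₂ : ∀ h : ℝ,
      v₂ h = deriv q t₀ - h • gradient (fun x => U (x, t₀ + h / 2)) (q₁ h))
    (hq₂ : ∀ h : ℝ, q₂ h = q₁ h + (h / 2) • v₂ h) :
    ((fun h : ℝ => ‖q₂ h - q (t₀ + h)‖) =o[nhds 0] fun h : ℝ => h ^ 2) ∧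
    ((fun h : ℝ => ‖v₂ h - deriv q (t₀ + h)‖) =o[nhds 0] fun h : ℝ => h ^ 2) := by
  obtain ⟨so, hsub, hopen, hmem⟩ := mem_nhds_iff.1 hs
  set G : (EuclideanSpace ℝ (Fin n)) × ℝ → EuclideanSpace ℝ (Fin n) :=
    fun p => gradient (fun x => U (x, p.2)) p.1 with hGdef
  have hG : ContDiff ℝ 1 G := gradContDiff hU
  set v₀ := deriv q t₀ with hv₀
  set φ : ℝ → EuclideanSpace ℝ (Fin n) :=
    fun h => G (q t₀ + (h / 2) • v₀, t₀ + h / 2) with hφdef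
  set D := fderiv ℝ G (q t₀, t₀) with hDdef
  set c := D ((1/2 : ℝ) • v₀, (1/2 : ℝ)) with hcdef
  -- φ has derivative c at 0
  have hψ : HasDerivAt (fun h : ℝ => ((q t₀ + (h / 2) • v₀, t₀ + h / 2) :
      (EuclideanSpace ℝ (Fin n)) × ℝ)) ((1/2 : ℝ) • v₀, (1/2 : ℝ)) 0 := by
    have h1 : HasDerivAt (fun h : ℝ => q t₀ + (h / 2) • v₀) ((1/2 : ℝ) • v₀) 0 := by
      simpa using (((hasDerivAt_id (0:ℝ)).div_const 2).smul_const v₀).const_add (q t₀)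
    have h2 : HasDerivAt (fun h : ℝ => t₀ + h / 2) (1/2 : ℝ) 0 := by
      simpa using ((hasDerivAt_id (0:ℝ)).div_const 2).const_add t₀
    exact h1.prodMk h2
  have hφ : HasDerivAt φ c 0 := by
    have hGd : HasFDerivAt G D ((fun h : ℝ => ((q t₀ + (h / 2) • v₀, t₀ + h / 2) :
        (EuclideanSpace ℝ (Fin n)) × ℝ)) 0) := by
      simpa using (hG.differentiable one_ne_zero (q t₀, t₀)).hasFDerivAt
    exact hGd.comp_hasDerivAt 0 hψ
  have hφ0 : φ 0 = G (q t₀, t₀) := by simp [hφdef]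
  -- the ODE at t₀ and the third derivative
  have ht₀s : t₀ ∈ s := mem_of_mem_nhds hs
  have ha₀ : deriv (deriv q) t₀ = -φ 0 := by rw [hφ0]; exact hode t₀ ht₀s
  have hj₀ : deriv (deriv (deriv q)) t₀ = -(2:ℝ) • c := by
    have hcurve : HasDerivAt (fun t : ℝ => ((q t, t) : (EuclideanSpace ℝ (Fin n)) × ℝ))
        (v₀, 1) t₀ := by
      have hqd : HasDerivAt q v₀ t₀ :=
        ((hq.differentiableOn (by norm_num)).differentiableAt hs).hasDerivAt
      exact hqd.prodMk (hasDerivAt_id t₀)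
    have hGd : HasFDerivAt G D (q t₀, t₀) :=
      (hG.differentiable one_ne_zero (q t₀, t₀)).hasFDerivAt
    have hcomp : HasDerivAt (fun t : ℝ => -(G (q t, t))) (-(D (v₀, 1))) t₀ :=
      (HasFDerivAt.comp_hasDerivAt
        (f := fun t : ℝ => ((q t, t) : (EuclideanSpace ℝ (Fin n)) × ℝ)) t₀ hGd hcurve).neg
    have heq : deriv (deriv q) =ᶠ[nhds t₀] fun t => -(G (q t, t)) := by
      filter_upwards [hs] with t ht
      exact hode t ht
    rw [heq.deriv_eq, hcomp.deriv]
    have : ((v₀, (1:ℝ)) : (EuclideanSpace ℝ (Fin n)) × ℝ) =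
        (2:ℝ) • ((1/2 : ℝ) • v₀, (1/2 : ℝ)) := by
      simp [Prod.smul_def, smul_smul]
    rw [hcdef, this, map_smul]
    module
  -- Taylor expansions
  have hq2' : ContDiffOn ℝ 2 q so := (hq.mono hsub).of_le (by norm_num)
  have hdq2 : ContDiffOn ℝ 2 (deriv q) so :=
    (hq.mono hsub).deriv_of_isOpen hopen (by norm_num)
  have Tq := taylor2 hopen hmem hq2'
  have Tq' := taylor2 hopen hmem hdq2
  -- little-o facts about φ
  have hφlit : (fun h : ℝ => φ h - φ 0 - h • c) =o[nhds 0] fun h : ℝ => h := by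
    have := hasDerivAt_iff_isLittleO.1 hφ
    simpa using this
  have hφcont : (fun h : ℝ => φ h - φ 0) =o[nhds 0] fun _ : ℝ => (1:ℝ) := by
    rw [isLittleO_one_iff]
    have := hφ.continuousAt.tendsto
    simpa using (this.sub_const (φ 0))
  constructor
  · -- position error
    have key : (fun h : ℝ => q₂ h - q (t₀ + h)) =
        fun h : ℝ => (-((h ^ 2 / 2) • (φ h - φ 0))) -
          (q (t₀ + h) - q t₀ - h • deriv q t₀ - (h ^ 2 / 2) • deriv (deriv q) t₀) := by
      funext h
      rw [hq₂ h, hv₂ h, hq₁ h, ha₀]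
      show q t₀ + (h / 2) • v₀ + (h / 2) • (v₀ - h • φ h) - q (t₀ + h) = _
      module
    have h1 : (fun h : ℝ => (h ^ 2 / 2)) =O[nhds 0] fun h : ℝ => h ^ 2 := by
      refine IsBigO.of_bound 1 (Filter.Eventually.of_forall fun h => ?_)
      rw [Real.norm_eq_abs, Real.norm_eq_abs, one_mul, abs_div, abs_two]
      linarith [abs_nonneg (h ^ 2)]
    have h2 : (fun h : ℝ => (h ^ 2 / 2) • (φ h - φ 0)) =o[nhds 0] fun h : ℝ => h ^ 2 := by
      simpa using h1.smul_isLittleO hφcont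
    have main : (fun h : ℝ => q₂ h - q (t₀ + h)) =o[nhds 0] fun h : ℝ => h ^ 2 := by
      rw [key]; exact h2.neg_left.sub Tq
    exact main.norm_left
  · -- velocity error
    have key : (fun h : ℝ => v₂ h - deriv q (t₀ + h)) =
        fun h : ℝ => (-(h • (φ h - φ 0 - h • c))) -
          (deriv q (t₀ + h) - deriv q t₀ - h • deriv (deriv q) t₀ -
            (h ^ 2 / 2) • deriv (deriv (deriv q)) t₀) := by
      funext h
      rw [hv₂ h, hq₁ h, ha₀, hj₀]
      show v₀ - h • φ h - deriv q (t₀ + h) = _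
      module
    have h1 : (fun h : ℝ => h • (φ h - φ 0 - h • c)) =o[nhds 0] fun h : ℝ => h * h :=
      (isBigO_refl (fun h : ℝ => h) (nhds 0)).smul_isLittleO hφlit
    have h2 : (fun h : ℝ => h • (φ h - φ 0 - h • c)) =o[nhds 0] fun h : ℝ => h ^ 2 := by
      simpa [sq] using h1
    have main : (fun h : ℝ => v₂ h - deriv q (t₀ + h)) =o[nhds 0] fun h : ℝ => h ^ 2 := by
      rw [key]; exact h2.neg_left.sub Tq'
    exact main.norm_left
end
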